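/- For arbitrary N≥2 self-adjoint operators A_1,…,A_N on a finite-dimensional complex Hilbert space and unit vector ψ, the sum of variances satisfies: Σ_{i=1}^N Var(A_i) ≥ (1/N)·Var(Σ_{i=1}^N A_i) + (2/(N²(N−1)))·(Σ_{1≤i<j≤N} ΔA_{ij})², where ΔA_{ij} = √Var(A_i − A_j). -/

import Mathlib

open scoped InnerProductSpace BigOperators

noncomputable def Var {H : Type*} [NormedAddCommGroup H] [InnerProductSpace ℂ H]
    (A : H →ₗ[ℂ] H) (ψ : H) : ℝ :=
  (⟪ψ, A (A ψ)⟫_ℂ).re - ((⟪ψ, A ψ⟫_ℂ).re) ^ 2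

lemma var_eq_norm_sq {H : Type*} [NormedAddCommGroup H] [InnerProductSpace ℂ H]
    (X : H →ₗ[ℂ] H) (hX : X.IsSymmetric) (ψ : H) (hψ : ‖ψ‖ = 1) :
    Var X ψ = ‖X ψ - (((⟪ψ, X ψ⟫_ℂ).re : ℂ)) • ψ‖ ^ 2 := by
  set r : ℝ := (⟪ψ, X ψ⟫_ℂ).re with hr
  have h1 : ‖X ψ - ((r : ℂ)) • ψ‖ ^ 2
      = ‖X ψ‖ ^ 2 - 2 * (⟪X ψ, (r : ℂ) • ψ⟫_ℂ).re + ‖(r : ℂ) • ψ‖ ^ 2 :=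
    norm_sub_sq (𝕜 := ℂ) _ _
  have h2 : (⟪X ψ, (r : ℂ) • ψ⟫_ℂ).re = r * (⟪X ψ, ψ⟫_ℂ).re := by
    rw [inner_smul_right]; simp
  have h3 : (⟪X ψ, ψ⟫_ℂ).re = r := by
    rw [hX ψ ψ]
  have h4 : ‖(r : ℂ) • ψ‖ ^ 2 = r ^ 2 := by
    rw [norm_smul, hψ]; simp [sq_abs]
  have h5 : (⟪ψ, X (X ψ)⟫_ℂ).re = ‖X ψ‖ ^ 2 := by
    rw [← hX ψ (X ψ)]
    exact inner_self_eq_norm_sq (𝕜 := ℂ) (X ψ)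
  rw [Var, h1, h2, h3, h4, h5]
  ring

lemma key_vec {E : Type*} [NormedAddCommGroup E] [InnerProductSpace ℝ E]
    (N : ℕ) (hN : 2 ≤ N) (v : Fin N → E) :
    ∑ i : Fin N, ‖v i‖ ^ 2 ≥
      (1 / (N : ℝ)) * ‖∑ i : Fin N, v i‖ ^ 2 +
        (2 / ((N : ℝ) ^ 2 * (N - 1))) *
          (∑ i : Fin N, ∑ j ∈ Finset.Ioi i, ‖v i - v j‖) ^ 2 := by
  have hNpos : (0 : ℝ) < N := by positivity
  have hN1 : (0 : ℝ) < (N : ℝ) - 1 := by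
    have : (2 : ℝ) ≤ N := by exact_mod_cast hN
    linarith
  set T : ℝ := ∑ i : Fin N, ‖v i‖ ^ 2 with hT
  set U : ℝ := ‖∑ i : Fin N, v i‖ ^ 2 with hU
  set D2 : ℝ := ∑ i : Fin N, ∑ j ∈ Finset.Ioi i, ‖v i - v j‖ ^ 2 with hD2
  set S : ℝ := ∑ i : Fin N, ∑ j ∈ Finset.Ioi i, ‖v i - v j‖ with hS
  -- full double sum
  have hfull : ∑ i : Fin N, ∑ j : Fin N, ‖v i - v j‖ ^ 2 = 2 * N * T - 2 * U := by
    have hexp : ∀ i j : Fin N, ‖v i - v j‖ ^ 2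
        = ‖v i‖ ^ 2 - 2 * ⟪v i, v j⟫_ℝ + ‖v j‖ ^ 2 := fun i j => norm_sub_sq_real _ _
    have hinner : ∑ i : Fin N, ∑ j : Fin N, ⟪v i, v j⟫_ℝ = U := by
      rw [hU, ← real_inner_self_eq_norm_sq]
      rw [sum_inner]
      exact Finset.sum_congr rfl fun i _ => (inner_sum _ _ _).symm
    calc ∑ i : Fin N, ∑ j : Fin N, ‖v i - v j‖ ^ 2
        = ∑ i : Fin N, ∑ j : Fin N, (‖v i‖ ^ 2 - 2 * ⟪v i, v j⟫_ℝ + ‖v j‖ ^ 2) := by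
          simp_rw [hexp]
      _ = ∑ i : Fin N, ((N : ℝ) * ‖v i‖ ^ 2 - 2 * ∑ j : Fin N, ⟪v i, v j⟫_ℝ + T) := by
          refine Finset.sum_congr rfl fun i _ => ?_
          rw [Finset.sum_add_distrib, Finset.sum_sub_distrib, Finset.sum_const,
            Finset.card_univ, Fintype.card_fin, ← Finset.mul_sum]
          simp [hT, nsmul_eq_mul]
      _ = 2 * N * T - 2 * U := by
          rw [Finset.sum_add_distrib, Finset.sum_sub_distrib, Finset.sum_const,
            Finset.card_univ, Fintype.card_fin, ← Finset.mul_sum, ← Finset.mul_sum, hinner]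
          simp [hT, nsmul_eq_mul]
          ring
  -- doubling identity
  have hdouble : 2 * D2 = 2 * N * T - 2 * U := by
    have h := Finset.sum_sum_Ioi_add_eq_sum_sum_off_diag (fun i j => ‖v i - v j‖ ^ 2)
    have hsymm : ∀ i j : Fin N, ‖v j - v i‖ ^ 2 = ‖v i - v j‖ ^ 2 := by
      intro i j; rw [norm_sub_rev]
    have hL : ∑ i : Fin N, ∑ j ∈ Finset.Ioi i, (‖v j - v i‖ ^ 2 + ‖v i - v j‖ ^ 2)
        = 2 * D2 := by
      simp_rw [hsymm, hD2, ← two_mul, Finset.mul_sum]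
    have hR : ∀ i : Fin N, ∑ j ∈ ({i}ᶜ : Finset (Fin N)), ‖v j - v i‖ ^ 2
        = ∑ j : Fin N, ‖v j - v i‖ ^ 2 := by
      intro i
      rw [← Finset.sum_compl_add_sum ({i} : Finset (Fin N)) (fun j => ‖v j - v i‖ ^ 2)]
      simp
    rw [hL] at h
    rw [h]
    have hflip : ∑ i : Fin N, ∑ j : Fin N, ‖v j - v i‖ ^ 2 = 2 * N * T - 2 * U := by
      rw [Finset.sum_comm]; exact hfull
    rw [← hflip]
    refine Finset.sum_congr rfl fun i _ => ?_
    refine Finset.sum_subset (Finset.subset_univ _) fun j _ hj => ?_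
    have hji : j = i := by simpa using hj
    rw [hji]
    simp
  have hD2id : D2 = N * T - U := by linarith
  -- Cauchy-Schwarz
  have hcard : ((Finset.univ.sigma fun i : Fin N => Finset.Ioi i).card : ℝ)
      = N * (N - 1) / 2 := by
    have h1 : (Finset.univ.sigma fun i : Fin N => Finset.Ioi i).card
        = ∑ i : Fin N, (Finset.Ioi i).card := Finset.card_sigma _ _
    have h2 : ∑ i : Fin N, (Finset.Ioi i).card = ∑ i : Fin N, (N - 1 - (i : ℕ)) := by
      exact Finset.sum_congr rfl fun i _ => Fin.card_Ioi i
    have h3 : ∑ i : Fin N, (N - 1 - (i : ℕ)) = ∑ i ∈ Finset.range N, (N - 1 - i) := by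
      rw [Fin.sum_univ_eq_sum_range]
    have h4 : ∑ i ∈ Finset.range N, (N - 1 - i) = ∑ i ∈ Finset.range N, i := by
      exact Finset.sum_range_reflect (fun i => i) N
    have h5 : (∑ i ∈ Finset.range N, i) * 2 = N * (N - 1) := Finset.sum_range_id_mul_two N
    have hcnat : (Finset.univ.sigma fun i : Fin N => Finset.Ioi i).card * 2 = N * (N - 1) := by
      rw [h1, h2, h3, h4, h5]
    have : ((Finset.univ.sigma fun i : Fin N => Finset.Ioi i).card : ℝ) * 2
        = (N : ℝ) * ((N : ℝ) - 1) := by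
      have := congrArg (Nat.cast (R := ℝ)) hcnat
      push_cast [Nat.cast_sub (by omega : 1 ≤ N)] at this
      linarith [this]
    linarith
  have hCS : S ^ 2 ≤ (N * (N - 1) / 2) * D2 := by
    have hS' : S = ∑ x ∈ Finset.univ.sigma (fun i : Fin N => Finset.Ioi i),
        ‖v x.1 - v x.2‖ := by
      rw [hS, Finset.sum_sigma']
    have hD2' : D2 = ∑ x ∈ Finset.univ.sigma (fun i : Fin N => Finset.Ioi i),
        ‖v x.1 - v x.2‖ ^ 2 := by
      rw [hD2, Finset.sum_sigma']
    rw [hS', hD2', ← hcard]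
    exact sq_sum_le_card_mul_sum_sq
  have hD2nonneg : 0 ≤ D2 := by
    rw [hD2]
    refine Finset.sum_nonneg fun i _ => Finset.sum_nonneg fun j _ => by positivity
  -- arithmetic
  have h1 : (2 / ((N : ℝ) ^ 2 * (N - 1))) * S ^ 2 ≤ D2 / N := by
    rw [div_mul_eq_mul_div, div_le_div_iff₀ (by positivity) hNpos]
    nlinarith [mul_le_mul_of_nonneg_left hCS (by positivity : (0:ℝ) ≤ 2 * N)]
  have h2 : T = (1 / N) * U + D2 / N := by
    field_simp
    linarith
  linarith

lemma sum_symmetric {H : Type*} [NormedAddCommGroup H] [InnerProductSpace ℂ H]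
    {N : ℕ} (A : Fin N → H →ₗ[ℂ] H) (hA : ∀ i, (A i).IsSymmetric) :
    (∑ i : Fin N, A i).IsSymmetric := by
  intro x y
  simp only [LinearMap.sum_apply, sum_inner, inner_sum]
  exact Finset.sum_congr rfl fun i _ => hA i x y

theorem stmt_2 {H : Type*} [NormedAddCommGroup H] [InnerProductSpace ℂ H]
    [FiniteDimensional ℂ H] (N : ℕ) (hN : 2 ≤ N) (A : Fin N → H →ₗ[ℂ] H)
    (hA : ∀ i, (A i).IsSymmetric) (ψ : H) (hψ : ‖ψ‖ = 1) :
    ∑ i : Fin N, Var (A i) ψ ≥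
      (1 / (N : ℝ)) * Var (∑ i : Fin N, A i) ψ +
        (2 / ((N : ℝ) ^ 2 * (N - 1))) *
          (∑ i : Fin N, ∑ j ∈ Finset.univ.filter (fun j => i < j),
            Real.sqrt (Var (A i - A j) ψ)) ^ 2 := by
  letI : InnerProductSpace ℝ H := InnerProductSpace.rclikeToReal ℂ H
  set r : Fin N → ℝ := fun i => (⟪ψ, A i ψ⟫_ℂ).re with hrdef
  set v : Fin N → H := fun i => A i ψ - ((r i : ℂ)) • ψ with hvdef
  have hvar : ∀ i, Var (A i) ψ = ‖v i‖ ^ 2 := fun i => var_eq_norm_sq (A i) (hA i) ψ hψ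
  have hsum : Var (∑ i : Fin N, A i) ψ = ‖∑ i : Fin N, v i‖ ^ 2 := by
    have h1 := var_eq_norm_sq (∑ i : Fin N, A i) (sum_symmetric A hA) ψ hψ
    rw [h1]
    congr 1
    have h2 : (∑ i : Fin N, A i) ψ = ∑ i : Fin N, A i ψ := by
      simp [LinearMap.sum_apply]
    have h3 : (⟪ψ, (∑ i : Fin N, A i) ψ⟫_ℂ).re = ∑ i : Fin N, r i := by
      rw [h2, inner_sum]
      simp [hrdef]
    rw [h3, h2, hvdef]
    rw [Finset.sum_sub_distrib, ← Finset.sum_smul]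
    norm_cast
  have hdiff : ∀ i j, Var (A i - A j) ψ = ‖v i - v j‖ ^ 2 := by
    intro i j
    have h1 := var_eq_norm_sq (A i - A j) ((hA i).sub (hA j)) ψ hψ
    rw [h1]
    congr 1
    have h2 : (A i - A j) ψ = A i ψ - A j ψ := rfl
    have h3 : (⟪ψ, (A i - A j) ψ⟫_ℂ).re = r i - r j := by
      rw [h2, inner_sub_right]
      simp [hrdef]
    rw [h3, h2, hvdef]
    push_cast [sub_smul]
    abel
  have hsqrt : ∀ i j, Real.sqrt (Var (A i - A j) ψ) = ‖v i - v j‖ := by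
    intro i j
    rw [hdiff i j, Real.sqrt_sq (norm_nonneg _)]
  have hfilter : ∀ i : Fin N, Finset.univ.filter (fun j => i < j) = Finset.Ioi i := by
    intro i; ext j; simp
  simp_rw [hvar, hsum, hsqrt, hfilter]
  exact key_vec N hN v
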